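/- Let G be an n-vertex simple graph with at most 3n-6 edges, minimum degree at least 4, at least 2n-4 triangles, and such that for every vertex x the sum of the degrees of its neighbors is at most 3d(x)+2n-8. Then the number of paths on 4 vertices in G is strictly less than 7n^2 - 36n + 50. -/

import Mathlib

open SimpleGraph Finset

variable {V W : Type*}

/-- A path on 4 distinct vertices `a b c d` in `G`. -/
def IsPath4 (G : SimpleGraph V) (a b c d : V) : Prop :=
  G.Adj a b ∧ G.Adj b c ∧ G.Adj c d ∧
    a ≠ b ∧ a ≠ c ∧ a ≠ d ∧ b ≠ c ∧ b ≠ d ∧ c ≠ d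

/-- The number of paths on 4 vertices (3-paths) of `G`, counted as subgraphs,
i.e. ordered labelled paths identified with their reversals. -/
noncomputable def pathCount4 (G : SimpleGraph V) : ℕ :=
  {p : V × V × V × V | IsPath4 G p.1 p.2.1 p.2.2.1 p.2.2.2}.ncard / 2

/-- An embedding of a subdivision of `H` into `G`: branch vertices joined by
internally disjoint paths. -/
structure SubdivEmb (H : SimpleGraph W) (G : SimpleGraph V) where
  branch : W ↪ V
  walk : ∀ a b, H.Adj a b → G.Walk (branch a) (branch b)
  walk_isPath : ∀ a b (h : H.Adj a b), (walk a b h).IsPath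
  branch_mem : ∀ a b (h : H.Adj a b) (w : W),
    branch w ∈ (walk a b h).support → w = a ∨ w = b
  disjoint : ∀ a b c d (h₁ : H.Adj a b) (h₂ : H.Adj c d), s(a, b) ≠ s(c, d) →
    ∀ v, v ∈ (walk a b h₁).support → v ∈ (walk c d h₂).support →
      ∃ w, (w = a ∨ w = b) ∧ (w = c ∨ w = d) ∧ v = branch w

/-- A graph is planar iff it contains no subdivision of `K₅` nor of `K₃,₃`
(Kuratowski's theorem). -/
def IsPlanar (G : SimpleGraph V) : Prop :=
  IsEmpty (SubdivEmb (⊤ : SimpleGraph (Fin 5)) G) ∧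
  IsEmpty (SubdivEmb (completeBipartiteGraph (Fin 3) (Fin 3)) G)

/-- The graph `Fₙ`: a path on `n - 2` vertices (`0, …, n-3`) plus two adjacent
vertices (`n-2` and `n-1`), each joined to every vertex of the path. -/
def Fgraph (n : ℕ) : SimpleGraph (Fin n) :=
  SimpleGraph.fromRel (fun a b =>
    (b.val = a.val + 1 ∧ b.val < n - 2) ∨
    (a.val < n - 2 ∧ n - 2 ≤ b.val) ∨
    (n - 2 ≤ a.val ∧ n - 2 ≤ b.val))

/-- The number of triangles of `G`. -/
noncomputable def triangleCount (G : SimpleGraph V) : ℕ :=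
  {s : Finset V | G.IsNClique 3 s}.ncard


section Aux
variable [Fintype V] [DecidableEq V] (G : SimpleGraph V) [DecidableRel G.Adj]

instance : DecidablePred (fun p : V × V × V × V => IsPath4 G p.1 p.2.1 p.2.2.1 p.2.2.2) := by
  intro p; unfold IsPath4; infer_instance

/-- path 4-tuples -/
def P4F : Finset (V × V × V × V) :=
  univ.filter (fun p => IsPath4 G p.1 p.2.1 p.2.2.1 p.2.2.2)

/-- ordered triangles -/
def T3F : Finset (V × V × V) :=
  univ.filter (fun p => G.Adj p.1 p.2.1 ∧ G.Adj p.2.1 p.2.2 ∧ G.Adj p.1 p.2.2)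

/-- cherries at both endpoints of an edge -/
def FF : Finset ((V × V) × V × V) :=
  univ.filter (fun q => G.Adj q.1.1 q.1.2 ∧ q.2.1 ∈ (G.neighborFinset q.1.1).erase q.1.2 ∧
    q.2.2 ∈ (G.neighborFinset q.1.2).erase q.1.1)

lemma cardP4 : pathCount4 G = (P4F G).card / 2 := by
  unfold pathCount4 P4F
  congr 1
  rw [← Set.ncard_coe_finset]
  congr 1
  ext p
  simp

lemma cardFF : (FF G).card =
    ∑ x, ∑ y ∈ G.neighborFinset x, (G.degree x - 1) * (G.degree y - 1) := by
  rw [Finset.card_eq_sum_card_fiberwise (f := fun q => q.1) (t := univ) (fun x _ => mem_univ _)]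
  rw [Fintype.sum_prod_type]
  refine Finset.sum_congr rfl (fun x _ => ?_)
  rw [← Finset.sum_subset (Finset.subset_univ (G.neighborFinset x))]
  · refine Finset.sum_congr rfl (fun y hy => ?_)
    have hadj : G.Adj x y := by rwa [← mem_neighborFinset]
    have : (FF G).filter (fun q => q.1 = (x, y)) =
        ({(x,y)} : Finset (V × V)) ×ˢ ((G.neighborFinset x).erase y ×ˢ (G.neighborFinset y).erase x) := by
      ext q
      simp only [FF, mem_filter, mem_univ, true_and, mem_product, mem_singleton]
      constructor
      · rintro ⟨⟨h1, h2, h3⟩, hq⟩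
        rcases q with ⟨q1, q2⟩
        cases hq
        exact ⟨rfl, h2, h3⟩
      · rintro ⟨hq1, h2, h3⟩
        rcases q with ⟨q1, q2⟩
        cases hq1
        exact ⟨⟨hadj, h2, h3⟩, rfl⟩
    rw [this, card_product, card_product, card_singleton, one_mul,
      Finset.card_erase_of_mem (by rw [mem_neighborFinset]; exact hadj),
      Finset.card_erase_of_mem (by rw [mem_neighborFinset]; exact hadj.symm),
      card_neighborFinset_eq_degree, card_neighborFinset_eq_degree]
  · intro y _ hy
    have hnadj : ¬ G.Adj x y := by rwa [mem_neighborFinset] at hy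
    rw [Finset.card_eq_zero]
    ext q
    simp only [FF, mem_filter, mem_univ, true_and, Finset.notMem_empty, iff_false]
    rintro ⟨⟨h1, _, _⟩, hq⟩
    rcases q with ⟨q1, q2⟩
    cases hq
    exact hnadj h1


lemma cardT3 : (T3F G).card = 6 * (G.cliqueFinset 3).card := by
  rw [Finset.card_eq_sum_card_fiberwise
    (f := fun p : V × V × V => ({p.1, p.2.1, p.2.2} : Finset V)) (t := G.cliqueFinset 3)
    (fun p hp => by
      simp only [Finset.mem_coe, T3F, mem_filter, mem_univ, true_and] at hp
      obtain ⟨h1, h2, h3⟩ := hp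
      rw [Finset.mem_coe, mem_cliqueFinset_iff, is3Clique_iff]
      exact ⟨p.1, p.2.1, p.2.2, h1, h3, h2, rfl⟩)]
  rw [Finset.sum_congr rfl (fun s hs => ?_), Finset.sum_const, smul_eq_mul, mul_comm]
  rw [mem_cliqueFinset_iff, is3Clique_iff] at hs
  obtain ⟨a, b, c, hab, hac, hbc, rfl⟩ := hs
  have key : (T3F G).filter (fun p => ({p.1, p.2.1, p.2.2} : Finset V) = {a, b, c}) =
      ({(a,b,c),(a,c,b),(b,a,c),(b,c,a),(c,a,b),(c,b,a)} : Finset (V × V × V)) := by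
    ext p
    simp only [T3F, mem_filter, mem_univ, true_and, mem_insert, mem_singleton]
    constructor
    · rintro ⟨⟨h1, h2, h3⟩, hset⟩
      have e1 : p.1 ∈ ({a, b, c} : Finset V) := hset ▸ (by simp)
      have e2 : p.2.1 ∈ ({a, b, c} : Finset V) := hset ▸ (by simp)
      have e3 : p.2.2 ∈ ({a, b, c} : Finset V) := hset ▸ (by simp)
      have n1 := h1.ne
      have n2 := h2.ne
      have n3 := h3.ne
      simp only [mem_insert, mem_singleton] at e1 e2 e3
      rcases p with ⟨p1, p2, p3⟩
      simp only [Prod.mk.injEq]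
      simp only at n1 n2 n3 ⊢
      rcases e1 with h1' | h1' | h1' <;> rcases e2 with h2' | h2' | h2' <;>
        rcases e3 with h3' | h3' | h3' <;> simp_all
    · have hs1 : ({a, c, b} : Finset V) = {a, b, c} := by ext x; simp; tauto
      have hs2 : ({b, a, c} : Finset V) = {a, b, c} := by ext x; simp; tauto
      have hs3 : ({b, c, a} : Finset V) = {a, b, c} := by ext x; simp; tauto
      have hs4 : ({c, a, b} : Finset V) = {a, b, c} := by ext x; simp; tauto
      have hs5 : ({c, b, a} : Finset V) = {a, b, c} := by ext x; simp; tauto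
      rintro (rfl | rfl | rfl | rfl | rfl | rfl) <;> refine ⟨⟨?_, ?_, ?_⟩, ?_⟩ <;>
        first | assumption | exact hab.symm | exact hac.symm | exact hbc.symm | rfl |
          exact hs1 | exact hs2 | exact hs3 | exact hs4 | exact hs5
  rw [key]
  have n1 := hab.ne
  have n2 := hac.ne
  have n3 := hbc.ne
  rw [card_insert_of_notMem (by simp [Prod.ext_iff]; tauto),
      card_insert_of_notMem (by simp [Prod.ext_iff]; tauto),
      card_insert_of_notMem (by simp [Prod.ext_iff]; tauto),
      card_insert_of_notMem (by simp [Prod.ext_iff]; tauto),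
      card_insert_of_notMem (by simp [Prod.ext_iff]; tauto),
      card_singleton]


lemma main_count : (P4F G).card + (T3F G).card ≤ (FF G).card := by
  classical
  set f4 : V × V × V × V → (V × V) × V × V :=
    fun p => ((p.2.1, p.2.2.1), (p.1, p.2.2.2)) with hf4
  set g3 : V × V × V → (V × V) × V × V :=
    fun p => ((p.1, p.2.1), (p.2.2, p.2.2)) with hg3
  have hinj4 : Set.InjOn f4 (P4F G) := by
    intro p _ q _ h
    simp only [hf4, Prod.mk.injEq] at h
    obtain ⟨⟨e1, e2⟩, e3, e4⟩ := h
    exact Prod.ext e3 (Prod.ext e1 (Prod.ext e2 e4))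
  have hinj3 : Set.InjOn g3 (T3F G) := by
    intro p _ q _ h
    simp only [hg3, Prod.mk.injEq] at h
    obtain ⟨⟨e1, e2⟩, e3, -⟩ := h
    exact Prod.ext e1 (Prod.ext e2 e3)
  have hsub4 : (P4F G).image f4 ⊆ FF G := by
    intro q hq
    simp only [mem_image] at hq
    obtain ⟨p, hp, rfl⟩ := hq
    simp only [P4F, mem_filter, mem_univ, true_and] at hp
    obtain ⟨h1, h2, h3, n1, n2, n3, n4, n5, n6⟩ := hp
    simp only [FF, mem_filter, mem_univ, true_and, hf4, mem_erase, mem_neighborFinset]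
    exact ⟨h2, ⟨n2, h1.symm⟩, ⟨n5.symm, h3⟩⟩
  have hsub3 : (T3F G).image g3 ⊆ FF G := by
    intro q hq
    simp only [mem_image] at hq
    obtain ⟨p, hp, rfl⟩ := hq
    simp only [T3F, mem_filter, mem_univ, true_and] at hp
    obtain ⟨h1, h2, h3⟩ := hp
    simp only [FF, mem_filter, mem_univ, true_and, hg3, mem_erase, mem_neighborFinset]
    exact ⟨h1, ⟨h2.ne', h3⟩, ⟨h3.ne', h2⟩⟩
  have hdisj : Disjoint ((P4F G).image f4) ((T3F G).image g3) := by
    rw [Finset.disjoint_left]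
    intro q hq4 hq3
    simp only [mem_image] at hq4 hq3
    obtain ⟨p, hp, rfl⟩ := hq4
    obtain ⟨r, hr, he⟩ := hq3
    simp only [P4F, mem_filter, mem_univ, true_and] at hp
    simp only [hf4, hg3, Prod.mk.injEq] at he
    exact hp.2.2.2.2.2.1 (he.2.1.symm.trans he.2.2)
  calc (P4F G).card + (T3F G).card
      = ((P4F G).image f4).card + ((T3F G).image g3).card := by
        rw [Finset.card_image_of_injOn hinj4, Finset.card_image_of_injOn hinj3]
    _ = (((P4F G).image f4) ∪ ((T3F G).image g3)).card := (Finset.card_union_of_disjoint hdisj).symm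
    _ ≤ (FF G).card := Finset.card_le_card (Finset.union_subset hsub4 hsub3)


lemma sumS : ∑ x, ∑ y ∈ G.neighborFinset x, (G.degree y : ℤ) = ∑ x, (G.degree x : ℤ)^2 := by
  have h1 : ∀ x : V, ∑ y ∈ G.neighborFinset x, (G.degree y : ℤ)
      = ∑ y, if G.Adj x y then (G.degree y : ℤ) else 0 := by
    intro x
    rw [neighborFinset_eq_filter, sum_filter]
  simp_rw [h1]
  rw [Finset.sum_comm]
  refine Finset.sum_congr rfl fun y _ => ?_
  rw [← sum_filter]
  have : univ.filter (fun x => G.Adj x y) = G.neighborFinset y := by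
    ext x
    simp [mem_neighborFinset, adj_comm]
  rw [this, Finset.sum_const, card_neighborFinset_eq_degree, nsmul_eq_mul, sq]

lemma keysum (n : ℕ)
    (hmin : ∀ v : V, 4 ≤ G.degree v)
    (hsum : ∀ x : V, (∑ y ∈ G.neighborFinset x, (G.degree y : ℤ)) ≤
      3 * G.degree x + 2 * n - 8) :
    (((FF G).card : ℤ)) ≤
      ∑ x, (((G.degree x : ℤ) - 4) * (2 * n - 8 - G.degree x)
        + 6 * (G.degree x : ℤ)^2 - 15 * G.degree x) := by
  have hS := sumS G
  have hc1 : ∀ x y : V, (((G.degree x - 1) * (G.degree y - 1) : ℕ) : ℤ)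
      = ((G.degree x : ℤ) - 1) * ((G.degree y : ℤ) - 1) := by
    intro x y
    have h1 : 1 ≤ G.degree x := le_trans (by norm_num) (hmin x)
    have h2 : 1 ≤ G.degree y := le_trans (by norm_num) (hmin y)
    push_cast [Nat.cast_sub h1, Nat.cast_sub h2]
    ring
  have hc : (((FF G).card : ℤ)) =
      ∑ x, ((G.degree x : ℤ) - 1) * ((∑ y ∈ G.neighborFinset x, (G.degree y : ℤ)) - G.degree x) := by
    rw [cardFF G]
    rw [Nat.cast_sum]
    refine Finset.sum_congr rfl fun x _ => ?_
    rw [Nat.cast_sum]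
    simp_rw [hc1]
    rw [← Finset.mul_sum, Finset.sum_sub_distrib, Finset.sum_const, card_neighborFinset_eq_degree,
      nsmul_eq_mul, mul_one]
  rw [hc]
  have h2 : ∑ x, ((G.degree x : ℤ) - 1) * ((∑ y ∈ G.neighborFinset x, (G.degree y : ℤ)) - G.degree x)
      = (∑ x, ((G.degree x : ℤ) - 4) * ((∑ y ∈ G.neighborFinset x, (G.degree y : ℤ)) - 4 * G.degree x))
        + 6 * ∑ x, (G.degree x : ℤ)^2 - 15 * ∑ x, (G.degree x : ℤ) := by
    have he : ∀ x ∈ (univ : Finset V), ((G.degree x : ℤ) - 1) * ((∑ y ∈ G.neighborFinset x, (G.degree y : ℤ)) - G.degree x)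
        = ((G.degree x : ℤ) - 4) * ((∑ y ∈ G.neighborFinset x, (G.degree y : ℤ)) - 4 * G.degree x)
          + 3 * (∑ y ∈ G.neighborFinset x, (G.degree y : ℤ)) + (3 * (G.degree x : ℤ)^2 - 15 * G.degree x) :=
      fun x _ => by ring
    rw [Finset.sum_congr rfl he, Finset.sum_add_distrib, Finset.sum_add_distrib,
      ← Finset.mul_sum, hS, Finset.sum_sub_distrib, ← Finset.mul_sum, ← Finset.mul_sum]
    ring
  rw [h2]
  have h3 : (∑ x, ((G.degree x : ℤ) - 4) * ((∑ y ∈ G.neighborFinset x, (G.degree y : ℤ)) - 4 * G.degree x))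
      ≤ ∑ x, ((G.degree x : ℤ) - 4) * (2 * n - 8 - G.degree x) := by
    refine Finset.sum_le_sum fun x _ => ?_
    have h4 : (4 : ℤ) ≤ (G.degree x : ℤ) := by exact_mod_cast hmin x
    exact mul_le_mul_of_nonneg_left (by have := hsum x; linarith) (by linarith)
  have h5 : ∑ x, (((G.degree x : ℤ) - 4) * (2 * n - 8 - G.degree x)
        + 6 * (G.degree x : ℤ)^2 - 15 * G.degree x)
      = (∑ x, ((G.degree x : ℤ) - 4) * (2 * n - 8 - G.degree x))
        + 6 * ∑ x, (G.degree x : ℤ)^2 - 15 * ∑ x, (G.degree x : ℤ) := by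
    rw [Finset.sum_sub_distrib, Finset.sum_add_distrib, ← Finset.mul_sum, ← Finset.mul_sum]
  rw [h5]
  linarith


end Aux

set_option maxHeartbeats 1600000 in
set_option maxRecDepth 16000 in
/-- An `n`-vertex graph (`n ≥ 6`) with at most `3n - 6` edges,
minimum degree at least 4, at least `2n - 4` triangles, and satisfying the
neighbor-degree-sum bound, has fewer than `7n² - 36n + 50` paths on 4 vertices. -/
theorem pathCount4_lt_of_minDegree_four {V : Type*} [Fintype V] [DecidableEq V]
    (G : SimpleGraph V) [DecidableRel G.Adj] (n : ℕ) (hn : Fintype.card V = n)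
    (hn6 : 6 ≤ n)
    (hedges : (G.edgeFinset.card : ℤ) ≤ 3 * n - 6)
    (hmin : ∀ v : V, 4 ≤ G.degree v)
    (htri : 2 * (n : ℤ) - 4 ≤ ((G.cliqueFinset 3).card : ℤ))
    (hsum : ∀ x : V, (∑ y ∈ G.neighborFinset x, (G.degree y : ℤ)) ≤
      3 * G.degree x + 2 * n - 8) :
    (pathCount4 G : ℤ) < 7 * n ^ 2 - 36 * n + 50 := by
  classical
  have hP2 : (pathCount4 G) * 2 ≤ (P4F G).card := by
    rw [cardP4 G]
    exact Nat.div_mul_le_self _ 2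
  have hcount : ((P4F G).card : ℤ) + 6 * ((G.cliqueFinset 3).card : ℤ) ≤ ((FF G).card : ℤ) := by
    have h1 := main_count G
    have h2 := cardT3 G
    rw [h2] at h1
    exact_mod_cast h1
  have hkey := keysum G n hmin hsum
  have hdeg : ∑ x, (G.degree x : ℤ) ≤ 6 * n - 12 := by
    have h1 : ∑ v, G.degree v = 2 * G.edgeFinset.card := G.sum_degrees_eq_twice_card_edges
    have h2 : ((∑ v, G.degree v : ℕ) : ℤ) = 2 * (G.edgeFinset.card : ℤ) := by exact_mod_cast h1
    rw [Nat.cast_sum] at h2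
    linarith
  have hd4 : ∀ x : V, (4 : ℤ) ≤ (G.degree x : ℤ) := fun x => by exact_mod_cast hmin x
  have hdn : ∀ x : V, (G.degree x : ℤ) ≤ (n : ℤ) - 1 := by
    intro x
    have := G.degree_lt_card_verts x
    rw [hn] at this
    have : (G.degree x : ℤ) < (n : ℤ) := by exact_mod_cast this
    linarith
  have hcardu : (univ : Finset V).card = n := by rw [card_univ, hn]
  -- final arithmetic helper
  have finish : ((P4F G).card : ℤ) ≤ 14 * n ^ 2 - 72 * n + 98 →
      (pathCount4 G : ℤ) < 7 * n ^ 2 - 36 * n + 50 := by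
    intro h
    have h2 : ((pathCount4 G : ℤ)) * 2 ≤ ((P4F G).card : ℤ) := by exact_mod_cast hP2
    linarith
  by_cases hcase : ∀ x : V, (G.degree x : ℤ) ≤ (n : ℤ) - 2
  · -- no vertex of full degree
    apply finish
    have hpt : ∀ x ∈ (univ : Finset V),
        ((G.degree x : ℤ) - 4) * (2 * n - 8 - G.degree x) + 6 * (G.degree x : ℤ) ^ 2 - 15 * G.degree x
          ≤ (7 * n - 9) * ((G.degree x : ℤ) - 4) + 36 := by
      intro x _
      have h1 := hd4 x
      have h2 := hcase x
      have hn' : (6 : ℤ) ≤ (n : ℤ) := by exact_mod_cast hn6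
      nlinarith [sq_nonneg ((G.degree x : ℤ) - 4)]
    have hsum1 : ∑ x, (((G.degree x : ℤ) - 4) * (2 * n - 8 - G.degree x)
          + 6 * (G.degree x : ℤ) ^ 2 - 15 * G.degree x)
        ≤ (7 * n - 9) * ((∑ x, (G.degree x : ℤ)) - 4 * n) + 36 * n := by
      calc _ ≤ ∑ x, ((7 * (n:ℤ) - 9) * ((G.degree x : ℤ) - 4) + 36) := Finset.sum_le_sum hpt
        _ = (7 * n - 9) * ((∑ x, (G.degree x : ℤ)) - 4 * n) + 36 * n := by
            rw [Finset.sum_add_distrib, ← Finset.mul_sum, Finset.sum_sub_distrib,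
              Finset.sum_const, Finset.sum_const, hcardu]
            push_cast
            ring
    have hn' : (6 : ℤ) ≤ (n : ℤ) := by exact_mod_cast hn6
    have hA10 : (0:ℤ) ≤ (∑ x, (G.degree x : ℤ)) - 4 * n := by
      have h := Finset.card_nsmul_le_sum univ (fun x => (G.degree x : ℤ)) 4 (fun x _ => hd4 x)
      rw [hcardu, nsmul_eq_mul] at h
      linarith
    have hA1 : (∑ x, (G.degree x : ℤ)) - 4 * n ≤ 2 * (n:ℤ) - 12 := by linarith
    have hB1 : (7*(n:ℤ)-9) * ((∑ x, (G.degree x : ℤ)) - 4 * n) ≤ (7*(n:ℤ)-9) * (2*(n:ℤ)-12) :=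
      mul_le_mul_of_nonneg_left hA1 (by linarith)
    linarith [htri, hsum1, hB1, hkey, hcount]
  · push_neg at hcase
    obtain ⟨u, hu⟩ := hcase
    have hdu : (G.degree u : ℤ) = (n : ℤ) - 1 := le_antisymm (hdn u) (by linarith)
    have hNu : G.neighborFinset u = univ.erase u := by
      apply Finset.eq_of_subset_of_card_le
      · intro x hx
        rw [mem_neighborFinset] at hx
        exact Finset.mem_erase.mpr ⟨hx.ne', mem_univ x⟩
      · rw [Finset.card_erase_of_mem (mem_univ u), hcardu, card_neighborFinset_eq_degree]
        omega
    have hadju : ∀ x : V, x ≠ u → G.Adj u x := by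
      intro x hx
      rw [← mem_neighborFinset, hNu]
      exact Finset.mem_erase.mpr ⟨hx, mem_univ x⟩
    have hxn3 : ∀ x : V, x ≠ u → (G.degree x : ℤ) ≤ (n : ℤ) - 3 := by
      intro x hx
      have hux : u ∈ G.neighborFinset x := by
        rw [mem_neighborFinset]
        exact (hadju x hx).symm
      have hsplit : (G.degree u : ℤ) + ∑ y ∈ (G.neighborFinset x).erase u, (G.degree y : ℤ)
          = ∑ y ∈ G.neighborFinset x, (G.degree y : ℤ) :=
        Finset.add_sum_erase _ (fun y => (G.degree y : ℤ)) hux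
      have hlb : ((G.neighborFinset x).erase u).card • (4 : ℤ)
          ≤ ∑ y ∈ (G.neighborFinset x).erase u, (G.degree y : ℤ) :=
        Finset.card_nsmul_le_sum _ _ _ (fun y _ => hd4 y)
      have hce : (((G.neighborFinset x).erase u).card : ℤ) = (G.degree x : ℤ) - 1 := by
        rw [Finset.card_erase_of_mem hux, card_neighborFinset_eq_degree]
        have h1 : 1 ≤ G.degree x := le_trans (by norm_num) (hmin x)
        push_cast [Nat.cast_sub h1]
        ring
      rw [nsmul_eq_mul, hce] at hlb
      have := hsum x
      linarith
    by_cases h8 : 8 ≤ n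
    · -- general large case
      apply finish
      have hn8 : (8 : ℤ) ≤ (n : ℤ) := by exact_mod_cast h8
      have hsplit : ∑ x, (((G.degree x : ℤ) - 4) * (2 * n - 8 - G.degree x)
            + 6 * (G.degree x : ℤ) ^ 2 - 15 * G.degree x)
          = (((G.degree u : ℤ) - 4) * (2 * n - 8 - G.degree u)
            + 6 * (G.degree u : ℤ) ^ 2 - 15 * G.degree u)
            + ∑ x ∈ univ.erase u, (((G.degree x : ℤ) - 4) * (2 * n - 8 - G.degree x)
            + 6 * (G.degree x : ℤ) ^ 2 - 15 * G.degree x) :=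
        (Finset.add_sum_erase _ _ (mem_univ u)).symm
      have hpt : ∀ x ∈ univ.erase u,
          ((G.degree x : ℤ) - 4) * (2 * n - 8 - G.degree x) + 6 * (G.degree x : ℤ) ^ 2 - 15 * G.degree x
            ≤ (7 * n - 14) * ((G.degree x : ℤ) - 4) + 36 := by
        intro x hx
        have h1 := hd4 x
        have h2 := hxn3 x (Finset.mem_erase.mp hx).1
        nlinarith [sq_nonneg ((G.degree x : ℤ) - 4)]
      have hsum2 : ∑ x ∈ univ.erase u, (((G.degree x : ℤ) - 4) * (2 * n - 8 - G.degree x)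
            + 6 * (G.degree x : ℤ) ^ 2 - 15 * G.degree x)
          ≤ (7 * n - 14) * ((∑ x ∈ univ.erase u, (G.degree x : ℤ)) - 4 * (n - 1)) + 36 * (n - 1) := by
        calc _ ≤ ∑ x ∈ univ.erase u, ((7 * (n:ℤ) - 14) * ((G.degree x : ℤ) - 4) + 36) :=
              Finset.sum_le_sum hpt
          _ = _ := by
            rw [Finset.sum_add_distrib, ← Finset.mul_sum, Finset.sum_sub_distrib,
              Finset.sum_const, Finset.sum_const, Finset.card_erase_of_mem (mem_univ u), hcardu]
            have h2 : ((n - 1 : ℕ) : ℤ) = (n:ℤ) - 1 := by omega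
            rw [nsmul_eq_mul, nsmul_eq_mul, h2]
            ring
      have hdeg_erase : ∑ x ∈ univ.erase u, (G.degree x : ℤ)
          = (∑ x, (G.degree x : ℤ)) - (G.degree u : ℤ) := by
        have h := Finset.add_sum_erase (univ : Finset V) (fun x => (G.degree x : ℤ)) (mem_univ u)
        linarith
      have hnn : ∀ x ∈ univ.erase u, (0 : ℤ) ≤ (G.degree x : ℤ) - 4 := fun x _ => by
        have := hd4 x; linarith
      have herased : (0:ℤ) ≤ ∑ x ∈ univ.erase u, ((G.degree x : ℤ) - 4) := Finset.sum_nonneg hnn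
      have herased2 : ∑ x ∈ univ.erase u, ((G.degree x : ℤ) - 4)
          = (∑ x ∈ univ.erase u, (G.degree x : ℤ)) - 4 * (n - 1) := by
        rw [Finset.sum_sub_distrib, Finset.sum_const, Finset.card_erase_of_mem (mem_univ u), hcardu]
        have h2 : ((n - 1 : ℕ) : ℤ) = (n:ℤ) - 1 := by omega
        rw [nsmul_eq_mul, h2]
        ring
      have hA : (∑ x ∈ univ.erase u, (G.degree x : ℤ)) - 4 * ((n:ℤ) - 1) ≤ (n:ℤ) - 7 := by
        rw [hdeg_erase, hdu]
        linarith
      have hA0 : (0:ℤ) ≤ (∑ x ∈ univ.erase u, (G.degree x : ℤ)) - 4 * ((n:ℤ) - 1) := by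
        linarith [herased, herased2]
      have hB : (7*(n:ℤ)-14) * ((∑ x ∈ univ.erase u, (G.degree x : ℤ)) - 4*((n:ℤ)-1))
          ≤ (7*(n:ℤ)-14)*((n:ℤ)-7) :=
        mul_le_mul_of_nonneg_left hA (by linarith)
      have hfu : ((G.degree u : ℤ) - 4) * (2*n-8 - G.degree u) + 6*(G.degree u:ℤ)^2 - 15*G.degree u
          = ((n:ℤ)-5)*((n:ℤ)-7) + 6*((n:ℤ)-1)^2 - 15*((n:ℤ)-1) := by
        rw [hdu]; ring
      have hPF : ((P4F G).card : ℤ) ≤ (∑ x, (((G.degree x : ℤ) - 4) * (2 * n - 8 - G.degree x)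
            + 6 * (G.degree x : ℤ) ^ 2 - 15 * G.degree x)) - 6 * ((G.cliqueFinset 3).card : ℤ) := by
        linarith [hcount, hkey]
      linarith [htri, hsplit, hsum2, hB, hfu, hPF, hn8]
    · -- n = 6 or n = 7
      have hn67 : n = 6 ∨ n = 7 := by omega
      have hex : ∃ x : V, x ≠ u := by
        have h1 : 1 < Fintype.card V := by omega
        exact Fintype.exists_ne_of_one_lt_card h1 u
      obtain ⟨x₀, hx₀⟩ := hex
      rcases hn67 with h6 | h7
      · exfalso
        have h1 := hxn3 x₀ hx₀
        have h2 := hmin x₀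
        omega
      · -- n = 7 hard case
        subst h7
        apply finish
        have hdu6 : G.degree u = 6 := by omega
        have hd4' : ∀ x : V, x ≠ u → G.degree x = 4 := by
          intro x hx
          have h1 := hxn3 x hx
          have h2 := hmin x
          omega
        -- bound on FF via hkey with explicit degrees
        have hkey7 : ((FF G).card : ℤ) ≤ 342 := by
          have hsplit : ∑ x, (((G.degree x : ℤ) - 4) * (2 * (7:ℕ) - 8 - G.degree x)
                + 6 * (G.degree x : ℤ) ^ 2 - 15 * G.degree x)
              = (((G.degree u : ℤ) - 4) * (2 * (7:ℕ) - 8 - G.degree u)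
                + 6 * (G.degree u : ℤ) ^ 2 - 15 * G.degree u)
                + ∑ x ∈ univ.erase u, (((G.degree x : ℤ) - 4) * (2 * (7:ℕ) - 8 - G.degree x)
                + 6 * (G.degree x : ℤ) ^ 2 - 15 * G.degree x) :=
            (Finset.add_sum_erase _ _ (mem_univ u)).symm
          have hterm : ∀ x ∈ univ.erase u, (((G.degree x : ℤ) - 4) * (2 * (7:ℕ) - 8 - G.degree x)
                + 6 * (G.degree x : ℤ) ^ 2 - 15 * G.degree x) = (36:ℤ) := by
            intro x hx
            rw [hd4' x (Finset.mem_erase.mp hx).1]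
            norm_num
          have hconst : ∑ x ∈ univ.erase u, (((G.degree x : ℤ) - 4) * (2 * (7:ℕ) - 8 - G.degree x)
                + 6 * (G.degree x : ℤ) ^ 2 - 15 * G.degree x) = 36 * 6 := by
            rw [Finset.sum_congr rfl hterm, Finset.sum_const,
              Finset.card_erase_of_mem (mem_univ u), hcardu]
            norm_num
          rw [hsplit, hconst, hdu6] at hkey
          calc ((FF G).card : ℤ) ≤ _ := hkey
            _ ≤ 342 := by norm_num
        -- now show triangles ≥ 11
        have ht10 : 10 ≤ (G.cliqueFinset 3).card := by omega
        -- adjacent pairs avoiding u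
        have hPPcard : (univ.filter (fun p : V × V => G.Adj p.1 p.2 ∧ p.1 ≠ u ∧ p.2 ≠ u)).card
            = 18 := by
          rw [Finset.card_eq_sum_card_fiberwise (f := fun p : V × V => p.1) (t := univ.erase u)
            (fun p hp => by
              simp only [Finset.mem_coe, mem_filter, mem_univ, true_and] at hp
              exact Finset.mem_erase.mpr ⟨hp.2.1, mem_univ _⟩)]
          have hfibc : ∀ x ∈ univ.erase u,
              ((univ.filter (fun p : V × V => G.Adj p.1 p.2 ∧ p.1 ≠ u ∧ p.2 ≠ u)).filter
                (fun p => p.1 = x)).card = 3 := by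
            intro x hx
            obtain ⟨hxu, -⟩ := Finset.mem_erase.mp hx
            have hfib : (univ.filter (fun p : V × V => G.Adj p.1 p.2 ∧ p.1 ≠ u ∧ p.2 ≠ u)).filter
                  (fun p => p.1 = x)
                = ({x} : Finset V) ×ˢ ((G.neighborFinset x).erase u) := by
              ext q
              simp only [mem_filter, mem_univ, true_and, mem_product, mem_singleton, mem_erase,
                mem_neighborFinset]
              constructor
              · rintro ⟨⟨h1, h2, h3⟩, h4⟩
                exact ⟨h4, h3, h4 ▸ h1⟩
              · rintro ⟨h4, h3, h1⟩
                refine ⟨⟨?_, ?_, h3⟩, h4⟩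
                · rw [h4]; exact h1
                · rw [h4]; exact hxu
            rw [hfib, card_product, card_singleton, one_mul,
              Finset.card_erase_of_mem (by rw [mem_neighborFinset]; exact (hadju x hxu).symm),
              card_neighborFinset_eq_degree, hd4' x hxu]
          rw [Finset.sum_congr rfl hfibc, Finset.sum_const,
            Finset.card_erase_of_mem (mem_univ u), hcardu]
          norm_num
        set PP : Finset (V × V) := univ.filter (fun p : V × V => G.Adj p.1 p.2 ∧ p.1 ≠ u ∧ p.2 ≠ u)
          with hPPdef
        set TU : Finset (Finset V) := PP.image (fun p => ({u, p.1, p.2} : Finset V)) with hTUdef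
        have hTUmem : ∀ s ∈ TU, u ∈ s ∧ s ∈ G.cliqueFinset 3 := by
          intro s hs
          rw [hTUdef, mem_image] at hs
          obtain ⟨p, hp, rfl⟩ := hs
          rw [hPPdef, mem_filter] at hp
          obtain ⟨-, h1, h2, h3⟩ := hp
          refine ⟨by simp, ?_⟩
          rw [mem_cliqueFinset_iff, is3Clique_iff]
          exact ⟨u, p.1, p.2, hadju p.1 h2, hadju p.2 h3, h1, rfl⟩
        have hfib2 : ∀ b ∈ TU, 2 ≤ (PP.filter (fun p => ({u, p.1, p.2} : Finset V) = b)).card := by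
          intro b hb
          rw [hTUdef, mem_image] at hb
          obtain ⟨p, hp, rfl⟩ := hb
          have hp' := hp
          rw [hPPdef, mem_filter] at hp'
          obtain ⟨-, h1, h2, h3⟩ := hp'
          have hmem2 : (p.2, p.1) ∈ PP := by
            rw [hPPdef, mem_filter]
            exact ⟨mem_univ _, h1.symm, h3, h2⟩
          have hne : (p.1, p.2) ≠ (p.2, p.1) := by
            simp only [Prod.mk.injEq, ne_eq, not_and]
            intro h; exact absurd h h1.ne
          have hsub2 : ({(p.1, p.2), (p.2, p.1)} : Finset (V × V))
              ⊆ PP.filter (fun q => ({u, q.1, q.2} : Finset V) = {u, p.1, p.2}) := by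
            intro q hq
            simp only [mem_insert, mem_singleton] at hq
            rcases hq with rfl | rfl
            · rw [mem_filter]
              refine ⟨?_, rfl⟩
              simpa only [Prod.mk.eta] using hp
            · rw [mem_filter]
              refine ⟨hmem2, ?_⟩
              ext z
              simp only [mem_insert, mem_singleton]
              tauto
          calc 2 = ({(p.1, p.2), (p.2, p.1)} : Finset (V × V)).card := by
                rw [card_insert_of_notMem (by simpa using hne), card_singleton]
            _ ≤ _ := Finset.card_le_card (by
                convert hsub2 using 2)
        have hTU9 : 9 ≤ TU.card := by
          have h := Finset.card_le_mul_card_image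
            (f := fun p : V × V => ({u, p.1, p.2} : Finset V)) PP 2 (fun b hb => ?_)
          · rw [hPPcard] at h
            rw [hTUdef]
            omega
          · -- fibers at most 2
            rw [hTUdef] at *
            rw [mem_image] at hb
            obtain ⟨p, hp, rfl⟩ := hb
            have hp' := hp
            rw [hPPdef, mem_filter] at hp'
            obtain ⟨-, h1, h2, h3⟩ := hp'
            have hsub : PP.filter (fun q => ({u, q.1, q.2} : Finset V) = {u, p.1, p.2})
                ⊆ {(p.1, p.2), (p.2, p.1)} := by
              intro q hq
              rw [mem_filter] at hq
              obtain ⟨hqPP, hqeq⟩ := hq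
              rw [hPPdef, mem_filter] at hqPP
              obtain ⟨-, g1, g2, g3⟩ := hqPP
              have m1 : q.1 ∈ ({u, p.1, p.2} : Finset V) := hqeq ▸ (by simp)
              have m2 : q.2 ∈ ({u, p.1, p.2} : Finset V) := hqeq ▸ (by simp)
              simp only [mem_insert, mem_singleton] at m1 m2
              rcases m1 with e1 | e1 | e1 <;> rcases m2 with e2 | e2 | e2 <;>
                simp only [mem_insert, mem_singleton, Prod.ext_iff] <;>
                first
                  | (exact absurd e1 g2)
                  | (exact absurd e2 g3)
                  | (exact absurd (e1.trans e2.symm) g1.ne)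
                  | (exact Or.inl ⟨e1, e2⟩)
                  | (exact Or.inr ⟨e1, e2⟩)
            calc (PP.filter (fun q => ({u, q.1, q.2} : Finset V) = {u, p.1, p.2})).card
                ≤ ({(p.1, p.2), (p.2, p.1)} : Finset (V × V)).card := Finset.card_le_card hsub
              _ ≤ 2 := card_insert_le _ _ |>.trans (by norm_num)
        -- triangles containing u are in TU
        have hCUsub : (G.cliqueFinset 3).filter (fun s => u ∈ s) ⊆ TU := by
          intro s hs
          rw [mem_filter, mem_cliqueFinset_iff, is3Clique_iff] at hs
          obtain ⟨⟨x, y, z, hxy, hxz, hyz, rfl⟩, hu3⟩ := hs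
          simp only [mem_insert, mem_singleton] at hu3
          rw [hTUdef, mem_image]
          rcases hu3 with rfl | rfl | rfl
          · exact ⟨(y, z), by rw [hPPdef, mem_filter]; exact ⟨mem_univ _, hyz, hxy.ne', hxz.ne'⟩, rfl⟩
          · refine ⟨(x, z), by rw [hPPdef, mem_filter]; exact ⟨mem_univ _, hxz, hxy.ne, hyz.ne'⟩, ?_⟩
            ext w; simp only [mem_insert, mem_singleton]; tauto
          · refine ⟨(x, y), by rw [hPPdef, mem_filter]; exact ⟨mem_univ _, hxy, hxz.ne, hyz.ne⟩, ?_⟩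
            ext w; simp only [mem_insert, mem_singleton]; tauto
        have hTUle9 : TU.card ≤ 9 := by
          have h := Finset.mul_card_image_le_card
            (f := fun p : V × V => ({u, p.1, p.2} : Finset V)) PP 2
            (fun b hb => hfib2 b (by rwa [← hTUdef] at hb))
          rw [hPPcard] at h
          rw [hTUdef] at *
          omega
        -- there is a triangle avoiding u
        have hex : ∃ s ∈ G.cliqueFinset 3, u ∉ s := by
          by_contra hcon
          push_neg at hcon
          have : G.cliqueFinset 3 ⊆ TU := fun s hs => hCUsub (mem_filter.mpr ⟨hs, hcon s hs⟩)
          have := Finset.card_le_card this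
          omega
        obtain ⟨s, hs, hus⟩ := hex
        have hs' := hs
        rw [mem_cliqueFinset_iff, is3Clique_iff] at hs'
        obtain ⟨a, b, c, hab, hac, hbc, rfl⟩ := hs'
        have hua : a ≠ u := fun h => hus (by simp [h])
        have hub : b ≠ u := fun h => hus (by simp [h])
        have huc : c ≠ u := fun h => hus (by simp [h])
        have habc : ∀ w' ∈ ({a, b, c} : Finset V), ∀ v' ∈ ({a, b, c} : Finset V),
            w' ≠ v' → G.Adj w' v' := by
          intro w' hw' v' hv' hne
          simp only [mem_insert, mem_singleton] at hw' hv'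
          rcases hw' with rfl | rfl | rfl <;> rcases hv' with rfl | rfl | rfl <;>
            first
              | (exact absurd rfl hne)
              | assumption
              | (exact hab.symm)
              | (exact hac.symm)
              | (exact hbc.symm)
        set Q4 : Finset V := insert u ({a, b, c} : Finset V) with hQ4def
        have hQ4card : Q4.card = 4 := by
          rw [hQ4def, card_insert_of_notMem (by simpa using hus),
            card_insert_of_notMem (by simp [hab.ne, hac.ne]),
            card_insert_of_notMem (by simp [hbc.ne]), card_singleton]
        set R : Finset V := univ \ Q4 with hRdef
        have hRcard : R.card = 3 := by
          rw [hRdef, card_sdiff_of_subset (subset_univ _), hcardu, hQ4card]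
        have hRprops : ∀ y ∈ R, y ≠ u ∧ y ∉ ({a, b, c} : Finset V) := by
          intro y hy
          rw [hRdef, mem_sdiff, hQ4def] at hy
          obtain ⟨-, hy2⟩ := hy
          simp only [mem_insert, mem_singleton] at hy2 ⊢
          tauto
        -- every two vertices of R are adjacent
        have hRadj : ∀ p ∈ R, ∀ q ∈ R, p ≠ q → G.Adj p q := by
          intro p hp q hq hpq
          by_contra hnadj
          obtain ⟨hpu, hpabc⟩ := hRprops p hp
          obtain ⟨hqu, hqabc⟩ := hRprops q hq
          -- neighbor sets minus u
          have key : ∀ z ∈ R, z ≠ u → ¬ G.Adj z q → z ≠ q →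
              2 ≤ (((G.neighborFinset z).erase u) ∩ ({a, b, c} : Finset V)).card → True := fun _ _ _ _ _ _ => trivial
          have hcard2 : ∀ z : V, z ∈ R → (∀ w, w ≠ z → w ≠ u → ¬ w ∈ ({a,b,c} : Finset V) → w ∈ R → w ∉ G.neighborFinset z → True) → True := fun _ _ _ => trivial
          -- do it concretely for p and q
          have hNin : ∀ z w : V, z ∈ R → w ∈ R → z ≠ w → ¬ G.Adj z w →
              2 ≤ (((G.neighborFinset z).erase u) ∩ ({a, b, c} : Finset V)).card := by
            intro z w hz hw hzw hnzw
            obtain ⟨hzu, hzabc⟩ := hRprops z hz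
            have hNz : ((G.neighborFinset z).erase u).card = 3 := by
              rw [Finset.card_erase_of_mem
                (by rw [mem_neighborFinset]; exact (hadju z hzu).symm),
                card_neighborFinset_eq_degree, hd4' z hzu]
            have hsubz : (G.neighborFinset z).erase u
                ⊆ (((G.neighborFinset z).erase u) ∩ ({a, b, c} : Finset V)) ∪ (R \ {z, w}) := by
              intro y hy
              obtain ⟨hyu, hyN⟩ := Finset.mem_erase.mp hy
              rw [mem_neighborFinset] at hyN
              by_cases hyabc : y ∈ ({a, b, c} : Finset V)
              · exact Finset.mem_union_left _ (Finset.mem_inter.mpr ⟨hy, hyabc⟩)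
              · refine Finset.mem_union_right _ ?_
                rw [mem_sdiff, hRdef, mem_sdiff, hQ4def]
                refine ⟨⟨mem_univ _, ?_⟩, ?_⟩
                · simp only [mem_insert, mem_singleton] at hyabc ⊢
                  tauto
                · simp only [mem_insert, mem_singleton]
                  push_neg
                  exact ⟨hyN.ne', fun h => hnzw (h ▸ hyN)⟩
            have hRzw : (R \ ({z, w} : Finset V)).card = 1 := by
              rw [card_sdiff_of_subset (by
                intro y hy
                simp only [mem_insert, mem_singleton] at hy
                rcases hy with rfl | rfl
                · exact hz
                · exact hw), hRcard, card_insert_of_notMem (by simpa using hzw),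
                card_singleton]
            have := Finset.card_le_card hsubz
            have hun := Finset.card_union_le
              (((G.neighborFinset z).erase u) ∩ ({a, b, c} : Finset V)) (R \ {z, w})
            omega
          have h2p := hNin p q hp hq hpq hnadj
          have h2q := hNin q p hq hp (Ne.symm hpq) (fun h => hnadj h.symm)
          -- the two 2-subsets of {a,b,c} intersect
          have hinter : ∃ w, w ∈ (G.neighborFinset p) ∧ w ∈ (G.neighborFinset q)
              ∧ w ∈ ({a, b, c} : Finset V) := by
            set A := (((G.neighborFinset p).erase u) ∩ ({a, b, c} : Finset V)) with hA
            set B := (((G.neighborFinset q).erase u) ∩ ({a, b, c} : Finset V)) with hB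
            have hABsub : A ∪ B ⊆ ({a, b, c} : Finset V) := by
              intro y hy
              rcases Finset.mem_union.mp hy with h | h
              · exact (Finset.mem_inter.mp h).2
              · exact (Finset.mem_inter.mp h).2
            have hABcard : (A ∪ B).card ≤ 3 := le_trans (Finset.card_le_card hABsub)
              (by
                have : ({a, b, c} : Finset V).card ≤ 3 := by
                  apply le_trans (card_insert_le _ _)
                  exact Nat.succ_le_succ (le_trans (card_insert_le _ _) (by simp))
                exact this)
            have := Finset.card_union_add_card_inter A B
            have hAB1 : 1 ≤ (A ∩ B).card := by omega
            obtain ⟨w, hw⟩ := Finset.card_pos.mp (show 0 < (A ∩ B).card by omega)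
            obtain ⟨hwA, hwB⟩ := Finset.mem_inter.mp hw
            exact ⟨w, (Finset.mem_erase.mp (Finset.mem_inter.mp hwA).1).2,
              (Finset.mem_erase.mp (Finset.mem_inter.mp hwB).1).2,
              (Finset.mem_inter.mp hwA).2⟩
          obtain ⟨w, hwp, hwq, hwabc⟩ := hinter
          have hwu : w ≠ u := by
            intro h
            exact hus (h ▸ hwabc)
          -- w has at least 5 neighbors
          have hwnbrs : insert u (insert p (insert q (({a, b, c} : Finset V).erase w)))
              ⊆ G.neighborFinset w := by
            intro y hy
            simp only [mem_insert] at hy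
            rw [mem_neighborFinset]
            rcases hy with rfl | rfl | rfl | hy
            · exact (hadju w hwu).symm
            · rw [mem_neighborFinset] at hwp
              exact hwp.symm
            · rw [mem_neighborFinset] at hwq
              exact hwq.symm
            · obtain ⟨hyw, hyabc⟩ := Finset.mem_erase.mp hy
              exact habc w hwabc y hyabc (Ne.symm hyw)
          have hpabc' : p ∉ ({a, b, c} : Finset V) := hpabc
          have hqabc' : q ∉ ({a, b, c} : Finset V) := hqabc
          have hwcard : (insert u (insert p (insert q (({a, b, c} : Finset V).erase w)))).card = 5 := by
            have he2 : (({a, b, c} : Finset V).erase w).card = 2 := by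
              rw [Finset.card_erase_of_mem hwabc]
              have : ({a, b, c} : Finset V).card = 3 := by
                rw [card_insert_of_notMem (by simp [hab.ne, hac.ne]),
                  card_insert_of_notMem (by simp [hbc.ne]), card_singleton]
              omega
            rw [card_insert_of_notMem, card_insert_of_notMem, card_insert_of_notMem, he2]
            · intro h
              exact hqabc' (Finset.erase_subset _ _ h)
            · simp only [mem_insert]
              push_neg
              exact ⟨hpq, fun h => hpabc' (Finset.erase_subset _ _ h)⟩
            · simp only [mem_insert]
              push_neg
              exact ⟨Ne.symm hpu, Ne.symm hqu, fun h => (by simpa using hus : ¬ (u = a ∨ u = b ∨ u = c))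
                (by simpa using Finset.erase_subset _ _ h)⟩
          have := Finset.card_le_card hwnbrs
          rw [hwcard, card_neighborFinset_eq_degree, hd4' w (fun h => hwu h)] at this
          omega
        -- R is a triangle
        have hRclique : R ∈ G.cliqueFinset 3 := by
          obtain ⟨r1, r2, r3, h12, h13, h23, hReq⟩ := Finset.card_eq_three.mp hRcard
          rw [mem_cliqueFinset_iff, is3Clique_iff]
          have m1 : r1 ∈ R := by rw [hReq]; simp
          have m2 : r2 ∈ R := by rw [hReq]; simp
          have m3 : r3 ∈ R := by rw [hReq]; simp
          exact ⟨r1, r2, r3, hRadj r1 m1 r2 m2 h12, hRadj r1 m1 r3 m3 h13,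
            hRadj r2 m2 r3 m3 h23, hReq⟩
        have huR : u ∉ R := by
          rw [hRdef, mem_sdiff, hQ4def]
          simp
        have haR : a ∉ R := by
          rw [hRdef, mem_sdiff, hQ4def]
          simp
        have hsR : ({a, b, c} : Finset V) ≠ R := fun h => haR (h ▸ (by simp))
        have hsTU : ({a, b, c} : Finset V) ∉ TU := fun h => hus (hTUmem _ h).1
        have hRTU : R ∉ TU := fun h => huR (hTUmem _ h).1
        have hsubT : insert ({a, b, c} : Finset V) (insert R TU) ⊆ G.cliqueFinset 3 := by
          intro z hz
          simp only [mem_insert] at hz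
          rcases hz with rfl | rfl | hz
          · exact hs
          · exact hRclique
          · exact (hTUmem _ hz).2
        have hcard11 : 11 ≤ (insert ({a, b, c} : Finset V) (insert R TU)).card := by
          rw [card_insert_of_notMem (by
              simp only [mem_insert]
              push_neg
              exact ⟨hsR, hsTU⟩),
            card_insert_of_notMem hRTU]
          omega
        have ht11 : 11 ≤ (G.cliqueFinset 3).card :=
          le_trans hcard11 (Finset.card_le_card hsubT)
        -- conclude
        have : ((P4F G).card : ℤ) ≤ 342 - 6 * 11 := by
          have h11 : (11 : ℤ) ≤ ((G.cliqueFinset 3).card : ℤ) := by exact_mod_cast ht11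
          linarith [hcount, hkey7]
        norm_num at this ⊢
        linarith
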